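/- Single-certificate base case of Lemma 3red: if ⟶₀* includes the axiom R5 and the only derivable 3-tuples with a bare key on the left are trivial, then for every key k': the set of 3-tuples ⟨k', q, V⟩ derivable from any set T of 4- and 5-tuples using rules R1, R2, R3, R5, R6 satisfies q = k' and V = [0,∞]. (That is, no nontrivial binding of a bare key can ever be derived.) -/

import Mathlib

/-- Principal expressions over keys `K` and local names `N`. -/
inductive PExp (K N : Type*) where
  | key : K → PExp K N
  | name : N → PExp K N
  | comp : PExp K N → PExp K N → PExp K N

/-- Extend a principal expression by a (possibly empty) string of local names
on the right; `PExp.ext r []` is `r`. -/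
def PExp.ext {K N : Type*} (p : PExp K N) (l : List N) : PExp K N :=
  l.foldl (fun e n => PExp.comp e (PExp.name n)) p

/-- Fully-qualified principal expressions. -/
inductive FQ {K N : Type*} : PExp K N → Prop where
  | key (k : K) : FQ (PExp.key k)
  | ext {p : PExp K N} (n : N) : FQ p → FQ (PExp.comp p (PExp.name n))

/-- Tuples: 3-tuples, 4-tuples, and 5-tuples (action expressions recorded by
their denotations). -/
inductive Tup (K N Act : Type*) where
  | t3 : PExp K N → PExp K N → Set ℕ → Tup K N Act
  | t4 : K → N → PExp K N → Set ℕ → Tup K N Act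
  | t5 : K → PExp K N → Bool → Set Act → Set ℕ → Tup K N Act

/-- The binary reduction rules R1, R2, R3, R6 (the versions whose second
4-tuple has a bare key as subject). -/
inductive Step0 {K N Act : Type*} : Tup K N Act → Tup K N Act → Tup K N Act → Prop where
  | r1 {k1 k2 : K} {p : PExp K N} {D2 : Bool} {A1 A2 : Set Act} {V1 V2 : Set ℕ} :
      Step0 (Tup.t5 k1 (PExp.key k2) true A1 V1) (Tup.t5 k2 p D2 A2 V2)
        (Tup.t5 k1 p D2 (A1 ∩ A2) (V1 ∩ V2))
  | r2 {k1 k2 k3 : K} {n m : N} {p : List N} {V1 V2 : Set ℕ} :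
      Step0 (Tup.t4 k1 n (PExp.ext (PExp.comp (PExp.key k2) (PExp.name m)) p) V1)
        (Tup.t4 k2 m (PExp.key k3) V2)
        (Tup.t4 k1 n (PExp.ext (PExp.key k3) p) (V1 ∩ V2))
  | r3 {k1 k2 k3 : K} {n : N} {p : List N} {D : Bool} {A : Set Act} {V1 V2 : Set ℕ} :
      Step0 (Tup.t5 k1 (PExp.ext (PExp.comp (PExp.key k2) (PExp.name n)) p) D A V1)
        (Tup.t4 k2 n (PExp.key k3) V2)
        (Tup.t5 k1 (PExp.ext (PExp.key k3) p) D A (V1 ∩ V2))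
  | r6 {k1 k2 : K} {n : N} {p : PExp K N} {q : List N} {V1 V2 : Set ℕ} :
      Step0 (Tup.t3 p (PExp.ext (PExp.comp (PExp.key k1) (PExp.name n)) q) V1)
        (Tup.t4 k1 n (PExp.key k2) V2)
        (Tup.t3 p (PExp.ext (PExp.key k2) q) (V1 ∩ V2))

/-- The axiom tuples: R5 instances `⟨p, p, [0,∞]⟩` for fully-qualified `p`. -/
def Ax0 (K N Act : Type*) : Set (Tup K N Act) :=
  {τ | ∃ p : PExp K N, FQ p ∧ τ = Tup.t3 p p Set.univ}

/-- Derivability `⟶₀*` using rules R1, R2, R3, R5, R6. -/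
inductive Deriv {K N Act : Type*} (Ax : Set (Tup K N Act))
    (St : Tup K N Act → Tup K N Act → Tup K N Act → Prop)
    (T : Set (Tup K N Act)) : Tup K N Act → Prop where
  | mem {τ} : τ ∈ T → Deriv Ax St T τ
  | ax {τ} : τ ∈ Ax → Deriv Ax St T τ
  | step {τ₁ τ₂ τ₃} : Deriv Ax St T τ₁ → Deriv Ax St T τ₂ → St τ₁ τ₂ τ₃ →
      Deriv Ax St T τ₃

/-- No nontrivial binding of a bare key can be derived: any derivable 3-tuple
`⟨k', q, V⟩` with a bare key on the left satisfies `q = k'` and `V = [0,∞]`. -/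
theorem bare_key_trivial {K N Act : Type*} (T : Set (Tup K N Act))
    (hT : ∀ (p q : PExp K N) (V : Set ℕ), Tup.t3 p q V ∉ T)
    {k' : K} {q : PExp K N} {V : Set ℕ}
    (h : Deriv (Ax0 K N Act) Step0 T (Tup.t3 (PExp.key k') q V)) :
    q = PExp.key k' ∧ V = Set.univ := by
  have ext_ne_key : ∀ (l : List N) (a b : PExp K N) (k : K),
      PExp.ext (PExp.comp a b) l ≠ PExp.key k := by
    intro l
    induction l with
    | nil => intro a b k h; simp [PExp.ext] at h
    | cons n l ih => intro a b k h; exact ih _ _ k h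
  have main : ∀ τ, Deriv (Ax0 K N Act) Step0 T τ →
      ∀ (k' : K) (q : PExp K N) (V : Set ℕ), τ = Tup.t3 (PExp.key k') q V →
      q = PExp.key k' ∧ V = Set.univ := by
    intro τ hd
    induction hd with
    | mem hm =>
        intro k' q V heq
        subst heq
        exact absurd hm (hT _ _ _)
    | ax ha =>
        intro k' q V heq
        obtain ⟨p, _, hp⟩ := ha
        rw [heq] at hp
        injection hp with h1 h2 h3
        exact ⟨h2 ▸ h1.symm, h3⟩
    | step h1 h2 hst ih1 ih2 =>
        intro k' q V heq
        cases hst with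
        | r1 => cases heq
        | r2 => cases heq
        | r3 => cases heq
        | r6 =>
            injection heq with e1 e2 e3
            subst e1
            have := (ih1 k' _ _ rfl).1
            exact absurd this (ext_ne_key _ _ _ _)
  exact main _ h k' q V rfl
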